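/- For any τ > 0 and any matrix Y ∈ R^{m×n} with singular value decomposition Y = U Σ Vᵀ, the matrix D_τ(Y) = U diag(max(σ_i - τ, 0)) Vᵀ is the unique minimizer of Z ↦ τ‖Z‖_* + (1/2)‖Z - Y‖_F². -/

import Mathlib

open Matrix

/-- Squared Frobenius norm. -/
def frobSq {m n : ℕ} (M : Matrix (Fin m) (Fin n) ℝ) : ℝ := ∑ i, ∑ j, (M i j) ^ 2

/-- Nuclear norm: sum of the singular values, i.e. of the square roots of the
eigenvalues of `AᴴA`. -/
noncomputable def nuclearNorm {m n : ℕ} (A : Matrix (Fin m) (Fin n) ℝ) : ℝ :=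
  ∑ i, Real.sqrt ((Matrix.posSemidef_conjTranspose_mul_self A).1.eigenvalues i)

namespace SVTAux


/-- entrywise inner product of matrices -/
def minner {m n : ℕ} (A B : Matrix (Fin m) (Fin n) ℝ) : ℝ := ∑ i, ∑ j, A i j * B i j

lemma minner_comm {m n : ℕ} (A B : Matrix (Fin m) (Fin n) ℝ) : minner A B = minner B A := by
  simp [minner, mul_comm]

lemma minner_eq_trace {m n : ℕ} (A B : Matrix (Fin m) (Fin n) ℝ) :
    minner A B = Matrix.trace (Aᵀ * B) := by
  simp [minner, Matrix.trace, Matrix.mul_apply, Matrix.diag]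
  rw [Finset.sum_comm]

lemma minner_conj {m n : ℕ} (U : Matrix (Fin m) (Fin m) ℝ) (hU : Uᵀ * U = 1)
    (V : Matrix (Fin n) (Fin n) ℝ) (hV : Vᵀ * V = 1)
    (A B : Matrix (Fin m) (Fin n) ℝ) :
    minner (U * A * Vᵀ) (U * B * Vᵀ) = minner A B := by
  rw [minner_eq_trace, minner_eq_trace]
  have : (U * A * Vᵀ)ᵀ * (U * B * Vᵀ) = V * (Aᵀ * B) * Vᵀ := by
    simp only [Matrix.transpose_mul, Matrix.transpose_transpose]
    calc V * (Aᵀ * Uᵀ) * (U * B * Vᵀ) = V * (Aᵀ * ((Uᵀ * U) * B)) * Vᵀ := by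
          simp only [Matrix.mul_assoc]
      _ = V * (Aᵀ * B) * Vᵀ := by rw [hU, Matrix.one_mul]
  rw [this, Matrix.trace_mul_cycle, ← Matrix.mul_assoc, hV, Matrix.one_mul]

lemma frobSq_eq_minner {m n : ℕ} (A : Matrix (Fin m) (Fin n) ℝ) :
    (∑ i, ∑ j, (A i j)^2) = minner A A := by
  simp [minner, sq]

lemma minner_sub_left {m n : ℕ} (A B C : Matrix (Fin m) (Fin n) ℝ) :
    minner (A - B) C = minner A C - minner B C := by
  simp [minner, Matrix.sub_apply, sub_mul, Finset.sum_sub_distrib]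

lemma minner_smul_right {m n : ℕ} (c : ℝ) (A B : Matrix (Fin m) (Fin n) ℝ) :
    minner A (c • B) = c * minner A B := by
  simp [minner, Finset.mul_sum, mul_comm, mul_left_comm]

lemma minner_neg_right {m n : ℕ} (A B : Matrix (Fin m) (Fin n) ℝ) :
    minner A (-B) = - minner A B := by
  simp [minner, Finset.sum_neg_distrib]


lemma sum_sq_mulVec_expand {m n : ℕ} (M : Matrix (Fin m) (Fin n) ℝ) (x : Fin n → ℝ) :
    ∑ i, ((M *ᵥ x) i)^2 = ∑ j, ∑ l, (Mᵀ * M) j l * (x j * x l) := by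
  simp only [mulVec, dotProduct, sq, Finset.sum_mul_sum, Matrix.mul_apply,
    Matrix.transpose_apply, Finset.sum_mul]
  rw [Finset.sum_comm]
  refine Finset.sum_congr rfl fun j _ => ?_
  rw [Finset.sum_comm]
  refine Finset.sum_congr rfl fun l _ => ?_
  rw [Finset.mul_sum]
  exact Finset.sum_congr rfl fun k _ => by ring

/-- norm preservation for matrices with orthonormal columns -/
lemma sum_sq_mulVec_orth {m n : ℕ} (M : Matrix (Fin m) (Fin n) ℝ) (hM : Mᵀ * M = 1)
    (x : Fin n → ℝ) : ∑ i, ((M *ᵥ x) i)^2 = ∑ j, (x j)^2 := by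
  rw [sum_sq_mulVec_expand, hM]
  simp [Matrix.one_apply, ite_mul, Finset.sum_ite_eq, sq]

lemma fin_sum_ite {m n : ℕ} (j : Fin n) (f : Fin m → ℝ) :
    ∑ i : Fin m, (if (i : ℕ) = (j : ℕ) then f i else 0) =
      if h : (j : ℕ) < m then f ⟨j, h⟩ else 0 := by
  split
  · next h =>
    rw [Finset.sum_eq_single (⟨j, h⟩ : Fin m)]
    · simp
    · intro b _ hb
      rw [if_neg]
      simpa [Fin.ext_iff] using hb
    · simp
  · next h =>
    refine Finset.sum_eq_zero fun i _ => ?_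
    rw [if_neg]
    intro hij
    exact h (hij ▸ i.isLt)

/-- a rectangular "diagonal" matrix with entries bounded by 1 is a contraction -/
lemma contr_diag {m n : ℕ} (D : Matrix (Fin m) (Fin n) ℝ)
    (hd : ∀ (i : Fin m) (j : Fin n), (i : ℕ) ≠ (j : ℕ) → D i j = 0) (hb : ∀ (i : Fin m) (j : Fin n), |D i j| ≤ 1)
    (x : Fin n → ℝ) : ∑ i, ((D *ᵥ x) i)^2 ≤ ∑ j, (x j)^2 := by
  rw [sum_sq_mulVec_expand]
  have hoff : ∀ j l : Fin n, j ≠ l → (Dᵀ * D) j l = 0 := by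
    intro j l hjl
    simp only [Matrix.mul_apply, Matrix.transpose_apply]
    refine Finset.sum_eq_zero fun i _ => ?_
    by_cases h : (i : ℕ) = (j : ℕ)
    · rw [hd i l (by omega : (i:ℕ) ≠ (l:ℕ)), mul_zero]
    · rw [hd i j h, zero_mul]
  have hdiag : ∀ j : Fin n, (Dᵀ * D) j j ≤ 1 := by
    intro j
    simp only [Matrix.mul_apply, Matrix.transpose_apply]
    have : ∀ i : Fin m, D i j * D i j = if (i:ℕ) = (j:ℕ) then D i j * D i j else 0 := by
      intro i
      by_cases h : (i:ℕ) = (j:ℕ)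
      · rw [if_pos h]
      · rw [if_neg h, hd i j h, mul_zero]
    rw [Finset.sum_congr rfl fun i _ => this i, fin_sum_ite]
    split
    · next h =>
      have := hb ⟨j, h⟩ j
      nlinarith [abs_nonneg (D ⟨j, h⟩ j), sq_abs (D ⟨j, h⟩ j)]
    · norm_num
  have hdiag0 : ∀ j : Fin n, 0 ≤ (Dᵀ * D) j j := by
    intro j
    simp only [Matrix.mul_apply, Matrix.transpose_apply]
    exact Finset.sum_nonneg fun i _ => mul_self_nonneg _
  calc ∑ j, ∑ l, (Dᵀ * D) j l * (x j * x l)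
      = ∑ j, (Dᵀ * D) j j * (x j * x j) := by
        refine Finset.sum_congr rfl fun j _ => ?_
        rw [Finset.sum_eq_single j]
        · intro l _ hlj
          rw [hoff j l (Ne.symm hlj), zero_mul]
        · simp
    _ ≤ ∑ j, (x j)^2 := by
        refine Finset.sum_le_sum fun j _ => ?_
        rw [sq]
        nlinarith [mul_self_nonneg (x j), hdiag j, hdiag0 j]


lemma eigbasis_orth {n : ℕ} {H : Matrix (Fin n) (Fin n) ℝ} (hH : H.IsHermitian) (i j : Fin n) :
    ∑ k, hH.eigenvectorBasis i k * hH.eigenvectorBasis j k = if i = j then 1 else 0 := by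
  have h := (orthonormal_iff_ite.mp hH.eigenvectorBasis.orthonormal) i j
  simpa [PiLp.inner_apply, RCLike.inner_apply, conj_trivial, mul_comm] using h

lemma eigbasis_complete {n : ℕ} {H : Matrix (Fin n) (Fin n) ℝ} (hH : H.IsHermitian) (k l : Fin n) :
    ∑ i, hH.eigenvectorBasis i k * hH.eigenvectorBasis i l = if k = l then 1 else 0 := by
  set Q : Matrix (Fin n) (Fin n) ℝ := Matrix.of fun a b => hH.eigenvectorBasis b a with hQdef
  have hQ : Qᵀ * Q = 1 := by
    ext a b
    simp only [Matrix.mul_apply, Matrix.transpose_apply, hQdef, Matrix.of_apply,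
      Matrix.one_apply]
    exact eigbasis_orth hH a b
  have hQ' : Q * Qᵀ = 1 := mul_eq_one_comm.mp hQ
  have := congrFun (congrFun hQ' k) l
  simpa [Matrix.mul_apply, hQdef, Matrix.one_apply] using this

lemma dot_mulVec_mulVec {m n : ℕ} (A : Matrix (Fin m) (Fin n) ℝ) (p q : Fin n → ℝ) (lam : ℝ)
    (heig : (Aᴴ * A) *ᵥ q = lam • q) :
    ∑ a, (A *ᵥ p) a * (A *ᵥ q) a = lam * ∑ k, p k * q k := by
  have expand : ∑ a, (A *ᵥ p) a * (A *ᵥ q) a = ∑ k, p k * ((Aᴴ * A) *ᵥ q) k := by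
    simp only [mulVec, dotProduct, Matrix.mul_apply, Matrix.conjTranspose_apply,
      star_trivial, Finset.sum_mul_sum, Finset.sum_mul, Finset.mul_sum]
    conv_lhs => rw [Finset.sum_comm]
    conv_rhs => rw [Finset.sum_comm]
    refine Finset.sum_congr rfl fun k _ => ?_
    conv_rhs => rw [Finset.sum_comm]
    refine Finset.sum_congr rfl fun l _ => ?_
    exact Finset.sum_congr rfl fun a _ => by ring
  rw [expand, heig]
  simp only [Pi.smul_apply, smul_eq_mul, Finset.mul_sum]
  exact Finset.sum_congr rfl fun k _ => by ring

/-- expansion of the matrix inner product along an orthonormal system -/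
lemma minner_eigexpand {m n : ℕ} (G Z : Matrix (Fin m) (Fin n) ℝ) (q : Fin n → Fin n → ℝ)
    (hcomp : ∀ k l : Fin n, ∑ i, q i k * q i l = if k = l then 1 else 0) :
    minner G Z = ∑ i, ∑ a, (G *ᵥ q i) a * (Z *ᵥ q i) a := by
  simp only [minner, mulVec, dotProduct, Finset.sum_mul_sum, Finset.sum_mul, Finset.mul_sum]
  conv_rhs => rw [Finset.sum_comm]
  refine Finset.sum_congr rfl fun a _ => ?_
  have rhs : ∑ i : Fin n, ∑ c : Fin n, ∑ b : Fin n, G a b * q i b * (Z a c * q i c)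
      = ∑ c : Fin n, ∑ b : Fin n, G a b * Z a c * (∑ i, q i b * q i c) := by
    rw [Finset.sum_comm]
    refine Finset.sum_congr rfl fun c _ => ?_
    rw [Finset.sum_comm]
    refine Finset.sum_congr rfl fun b _ => ?_
    rw [Finset.mul_sum]
    exact Finset.sum_congr rfl fun i _ => by ring
  rw [rhs]
  simp only [hcomp, mul_ite, mul_one, mul_zero, Finset.sum_ite_eq', Finset.mem_univ, if_true]

/-- The dual inequality: for a contraction `G`, `⟨G, Z⟩ ≤ ‖Z‖_*`. -/
lemma minner_le_nuclear {m n : ℕ} (Z G : Matrix (Fin m) (Fin n) ℝ)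
    (hG : ∀ x : Fin n → ℝ, ∑ i, ((G *ᵥ x) i)^2 ≤ ∑ j, (x j)^2) :
    minner G Z ≤ ∑ i, Real.sqrt ((Matrix.posSemidef_conjTranspose_mul_self Z).1.eigenvalues i) := by
  set hH := (Matrix.posSemidef_conjTranspose_mul_self Z).1 with hHdef
  set q : Fin n → Fin n → ℝ := fun i => ⇑(hH.eigenvectorBasis i) with hqdef
  have heig : ∀ i, (Zᴴ * Z) *ᵥ q i = hH.eigenvalues i • q i := fun i =>
    hH.mulVec_eigenvectorBasis i
  have hnn : ∀ i, 0 ≤ hH.eigenvalues i := fun i =>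
    (Matrix.posSemidef_conjTranspose_mul_self Z).eigenvalues_nonneg i
  have hqnorm : ∀ i, ∑ k, q i k * q i k = 1 := by
    intro i
    have := eigbasis_orth hH i i
    simpa [hqdef] using this
  rw [minner_eigexpand G Z q (fun k l => eigbasis_complete hH k l)]
  refine Finset.sum_le_sum fun i _ => ?_
  have hZq : ∑ a, ((Z *ᵥ q i) a)^2 = hH.eigenvalues i := by
    have := dot_mulVec_mulVec Z (q i) (q i) (hH.eigenvalues i) (heig i)
    rw [hqnorm i, mul_one] at this
    simpa [sq] using this
  have hGq : ∑ a, ((G *ᵥ q i) a)^2 ≤ 1 := by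
    calc ∑ a, ((G *ᵥ q i) a)^2 ≤ ∑ k, (q i k)^2 := hG (q i)
      _ = 1 := by simpa [sq] using hqnorm i
  calc ∑ a, (G *ᵥ q i) a * (Z *ᵥ q i) a
      ≤ Real.sqrt (∑ a, ((G *ᵥ q i) a)^2) * Real.sqrt (∑ a, ((Z *ᵥ q i) a)^2) :=
        Real.sum_mul_le_sqrt_mul_sqrt _ _ _
    _ ≤ 1 * Real.sqrt (hH.eigenvalues i) := by
        rw [hZq]
        refine mul_le_mul_of_nonneg_right ?_ (Real.sqrt_nonneg _)
        calc Real.sqrt (∑ a, ((G *ᵥ q i) a)^2) ≤ Real.sqrt 1 := Real.sqrt_le_sqrt hGq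
          _ = 1 := Real.sqrt_one
    _ = Real.sqrt (hH.eigenvalues i) := one_mul _

/-- pairing bound: `⟨G, U T Vᵀ⟩ ≤ ∑ T` for a contraction `G` and entrywise-nonneg `T`. -/
lemma minner_UTV_le {m n : ℕ} (G : Matrix (Fin m) (Fin n) ℝ)
    (hG : ∀ x : Fin n → ℝ, ∑ i, ((G *ᵥ x) i)^2 ≤ ∑ j, (x j)^2)
    (U : Matrix (Fin m) (Fin m) ℝ) (hU : Uᵀ * U = 1)
    (V : Matrix (Fin n) (Fin n) ℝ) (hV : Vᵀ * V = 1)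
    (T : Matrix (Fin m) (Fin n) ℝ) (hTpos : ∀ (i : Fin m) (j : Fin n), 0 ≤ T i j) :
    minner G (U * T * Vᵀ) ≤ ∑ j, ∑ k, T j k := by
  have hM : ∀ (k : Fin n) (j : Fin m),
      (Vᵀ * Gᵀ * U) k j = ∑ a, (G *ᵥ (fun b => V b k)) a * U a j := by
    intro k j
    simp only [Matrix.mul_apply, Matrix.transpose_apply, mulVec, dotProduct, Finset.sum_mul]
    refine Finset.sum_congr rfl fun a _ => Finset.sum_congr rfl fun b _ => by ring
  have hMle : ∀ (k : Fin n) (j : Fin m), (Vᵀ * Gᵀ * U) k j ≤ 1 := by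
    intro k j
    rw [hM]
    have hVcol : ∑ b, (V b k)^2 = 1 := by
      have := congrFun (congrFun hV k) k
      simpa [Matrix.mul_apply, Matrix.transpose_apply, Matrix.one_apply, sq] using this
    have hUcol : ∑ a, (U a j)^2 = 1 := by
      have := congrFun (congrFun hU j) j
      simpa [Matrix.mul_apply, Matrix.transpose_apply, Matrix.one_apply, sq] using this
    calc ∑ a, (G *ᵥ (fun b => V b k)) a * U a j
        ≤ Real.sqrt (∑ a, ((G *ᵥ (fun b => V b k)) a)^2) * Real.sqrt (∑ a, (U a j)^2) :=
          Real.sum_mul_le_sqrt_mul_sqrt _ _ _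
      _ ≤ Real.sqrt 1 * Real.sqrt 1 := by
          gcongr
          · exact (hG _).trans_eq hVcol
          · exact le_of_eq hUcol
      _ = 1 := by rw [Real.sqrt_one, one_mul]
  have htr : minner G (U * T * Vᵀ) = ∑ k, ∑ j, (Vᵀ * Gᵀ * U) k j * T j k := by
    rw [minner_eq_trace]
    have h1 : Gᵀ * (U * T * Vᵀ) = (Gᵀ * U * T) * Vᵀ := by
      simp only [Matrix.mul_assoc]
    rw [h1, Matrix.trace_mul_comm]
    simp only [Matrix.trace, Matrix.diag, Matrix.mul_apply, Matrix.transpose_apply]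
    refine Finset.sum_congr rfl fun k _ => ?_
    simp only [Finset.mul_sum, Finset.sum_mul]
    conv_lhs => rw [Finset.sum_comm]
    refine Finset.sum_congr rfl fun j _ => ?_
    conv_lhs => rw [Finset.sum_comm]
    refine Finset.sum_congr rfl fun a _ => ?_
    refine Finset.sum_congr rfl fun b _ => by ring
  rw [htr]
  calc ∑ k, ∑ j, (Vᵀ * Gᵀ * U) k j * T j k
      ≤ ∑ k, ∑ j, T j k := by
        refine Finset.sum_le_sum fun k _ => Finset.sum_le_sum fun j _ => ?_
        nlinarith [hMle k j, hTpos j k]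
    _ = ∑ j, ∑ k, T j k := Finset.sum_comm

/-- The nuclear norm of `U T Vᵀ` is at most the sum of the entries of `T` (entrywise nonneg). -/
lemma nuclear_le_entry_sum {m n : ℕ}
    (U : Matrix (Fin m) (Fin m) ℝ) (hU : Uᵀ * U = 1)
    (V : Matrix (Fin n) (Fin n) ℝ) (hV : Vᵀ * V = 1)
    (T : Matrix (Fin m) (Fin n) ℝ) (hTpos : ∀ (i : Fin m) (j : Fin n), 0 ≤ T i j) :
    ∑ i, Real.sqrt ((Matrix.posSemidef_conjTranspose_mul_self (U * T * Vᵀ)).1.eigenvalues i)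
      ≤ ∑ j, ∑ k, T j k := by
  set A := U * T * Vᵀ with hA
  set hH := (Matrix.posSemidef_conjTranspose_mul_self A).1 with hHdef
  set q : Fin n → Fin n → ℝ := fun i => ⇑(hH.eigenvectorBasis i) with hqdef
  set lam : Fin n → ℝ := hH.eigenvalues with hlamdef
  have heig : ∀ i, (Aᴴ * A) *ᵥ q i = lam i • q i := fun i => hH.mulVec_eigenvectorBasis i
  have hnn : ∀ i, 0 ≤ lam i := fun i =>
    (Matrix.posSemidef_conjTranspose_mul_self A).eigenvalues_nonneg i
  have hqnorm : ∀ i, ∑ k, q i k * q i k = 1 := by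
    intro i; simpa [hqdef] using eigbasis_orth hH i i
  -- the "left singular vectors"
  set u : Fin n → Fin m → ℝ :=
    fun i a => if lam i = 0 then 0 else (Real.sqrt (lam i))⁻¹ * (A *ᵥ q i) a with hudef
  set K : Matrix (Fin m) (Fin n) ℝ := Matrix.of (fun a i => u i a) with hKdef
  set Q : Matrix (Fin n) (Fin n) ℝ := Matrix.of (fun i b => q i b) with hQdef
  have hQorth : Qᵀ * Q = 1 := by
    ext b c
    simp only [Matrix.mul_apply, Matrix.transpose_apply, hQdef, Matrix.of_apply,
      Matrix.one_apply]
    exact eigbasis_complete hH b c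
  set G : Matrix (Fin m) (Fin n) ℝ := K * Q with hGdef
  have hAqq : ∀ i j, ∑ a, (A *ᵥ q i) a * (A *ᵥ q j) a = lam j * (if i = j then 1 else 0) := by
    intro i j
    rw [dot_mulVec_mulVec A (q i) (q j) (lam j) (heig j)]
    exact congrArg (fun t => lam j * t) (eigbasis_orth hH i j)
  have huu : ∀ i j, ∑ a, u i a * u j a
      = if i = j then (if lam i = 0 then 0 else 1) else 0 := by
    intro i j
    by_cases hi : lam i = 0
    · simp [hudef, hi]
    · by_cases hj : lam j = 0
      · simp only [hudef, hj, if_true, mul_zero, Finset.sum_const_zero]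
        have hij : i ≠ j := fun h => hi (h ▸ hj)
        simp [hij]
      · simp only [hudef, if_neg hi, if_neg hj]
        have : ∑ a, (Real.sqrt (lam i))⁻¹ * (A *ᵥ q i) a * ((Real.sqrt (lam j))⁻¹ * (A *ᵥ q j) a)
            = (Real.sqrt (lam i))⁻¹ * (Real.sqrt (lam j))⁻¹
              * ∑ a, (A *ᵥ q i) a * (A *ᵥ q j) a := by
          rw [Finset.mul_sum]
          exact Finset.sum_congr rfl fun a _ => by ring
        rw [this, hAqq i j]
        by_cases hij : i = j
        · subst hij
          have hs : Real.sqrt (lam i) ≠ 0 :=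
            Real.sqrt_ne_zero'.mpr (lt_of_le_of_ne (hnn i) (Ne.symm hi))
          simp only [if_pos rfl, if_neg hi, mul_one]
          field_simp
          nlinarith [Real.sq_sqrt (hnn i)]
        · simp [hij]
  -- G is a contraction
  have hGcontr : ∀ x : Fin n → ℝ, ∑ a, ((G *ᵥ x) a)^2 ≤ ∑ j, (x j)^2 := by
    intro x
    have h1 : G *ᵥ x = K *ᵥ (Q *ᵥ x) := by rw [hGdef, ← Matrix.mulVec_mulVec]
    rw [h1, sum_sq_mulVec_expand]
    have hKK : ∀ i j, (Kᵀ * K) i j = if i = j then (if lam i = 0 then 0 else 1) else 0 := by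
      intro i j
      simp only [Matrix.mul_apply, Matrix.transpose_apply, hKdef, Matrix.of_apply]
      exact huu i j
    calc ∑ i, ∑ j, (Kᵀ * K) i j * ((Q *ᵥ x) i * (Q *ᵥ x) j)
        = ∑ i, (if lam i = 0 then 0 else 1) * ((Q *ᵥ x) i * (Q *ᵥ x) i) := by
          refine Finset.sum_congr rfl fun i _ => ?_
          rw [Finset.sum_eq_single i]
          · rw [hKK i i, if_pos rfl]
          · intro j _ hji
            rw [hKK i j, if_neg (Ne.symm hji), zero_mul]
          · simp
      _ ≤ ∑ i, ((Q *ᵥ x) i)^2 := by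
          refine Finset.sum_le_sum fun i _ => ?_
          rw [sq]
          split
          · rw [zero_mul]; exact mul_self_nonneg _
          · rw [one_mul]
      _ = ∑ j, (x j)^2 := sum_sq_mulVec_orth Q hQorth x
  -- ⟨G, A⟩ equals the nuclear norm
  have hinner : minner G A = ∑ i, Real.sqrt (lam i) := by
    rw [minner_eq_trace, hGdef, Matrix.transpose_mul, Matrix.mul_assoc,
      Matrix.trace_mul_comm]
    simp only [Matrix.trace, Matrix.diag]
    have hterm : ∀ i, ((Kᵀ * A) * Qᵀ) i i = ∑ a, u i a * (A *ᵥ q i) a := by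
      intro i
      simp only [Matrix.mul_apply, Matrix.transpose_apply, hKdef, hQdef, Matrix.of_apply,
        mulVec, dotProduct, Finset.sum_mul, Finset.mul_sum]
      conv_lhs => rw [Finset.sum_comm]
      refine Finset.sum_congr rfl fun a _ => Finset.sum_congr rfl fun b _ => by ring
    refine Finset.sum_congr rfl fun i _ => ?_
    rw [hterm i]
    by_cases hi : lam i = 0
    · simp [hudef, hi, Real.sqrt_eq_zero']
    · simp only [hudef, if_neg hi]
      have : ∑ a, (Real.sqrt (lam i))⁻¹ * (A *ᵥ q i) a * (A *ᵥ q i) a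
          = (Real.sqrt (lam i))⁻¹ * ∑ a, (A *ᵥ q i) a * (A *ᵥ q i) a := by
        rw [Finset.mul_sum]
        exact Finset.sum_congr rfl fun a _ => by ring
      rw [this, hAqq i i, if_pos rfl, mul_one]
      have hs : Real.sqrt (lam i) ≠ 0 :=
        Real.sqrt_ne_zero'.mpr (lt_of_le_of_ne (hnn i) (Ne.symm hi))
      field_simp
      exact (Real.sq_sqrt (hnn i)).symm
  rw [← hinner]
  exact minner_UTV_le G hGcontr U hU V hV T hTpos

lemma sum_sq_add {m n : ℕ} (A B : Matrix (Fin m) (Fin n) ℝ) :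
    ∑ i, ∑ j, ((A + B) i j)^2
      = (∑ i, ∑ j, (A i j)^2) + 2 * minner A B + ∑ i, ∑ j, (B i j)^2 := by
  simp only [minner, Matrix.add_apply, add_sq, Finset.sum_add_distrib, Finset.mul_sum]
  ring_nf

end SVTAux

/-- Singular value soft-thresholding `D_τ(Y) = U max(Σ - τ, 0) Vᵀ` is the unique minimizer
of `Z ↦ τ‖Z‖_* + (1/2)‖Z - Y‖_F²`, for any SVD `Y = U Σ Vᵀ`. -/
theorem svt_is_prox_of_nuclear_norm
    {m n : ℕ} (τ : ℝ) (hτ : 0 < τ)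
    (U : Matrix (Fin m) (Fin m) ℝ) (hU : Uᵀ * U = 1)
    (V : Matrix (Fin n) (Fin n) ℝ) (hV : Vᵀ * V = 1)
    (S : Matrix (Fin m) (Fin n) ℝ)
    (hSdiag : ∀ (i : Fin m) (j : Fin n), (i : ℕ) ≠ (j : ℕ) → S i j = 0)
    (hSpos : ∀ (i : Fin m) (j : Fin n), 0 ≤ S i j)
    (Y : Matrix (Fin m) (Fin n) ℝ) (hY : Y = U * S * Vᵀ)
    (T : Matrix (Fin m) (Fin n) ℝ)
    (hT : ∀ (i : Fin m) (j : Fin n), T i j = if (i : ℕ) = (j : ℕ) then max (S i j - τ) 0 else 0) :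
    (∀ Z : Matrix (Fin m) (Fin n) ℝ,
        τ * nuclearNorm (U * T * Vᵀ) + (1 / 2) * frobSq (U * T * Vᵀ - Y) ≤
          τ * nuclearNorm Z + (1 / 2) * frobSq (Z - Y)) ∧
      ∀ Z : Matrix (Fin m) (Fin n) ℝ,
        (∀ Z', τ * nuclearNorm Z + (1 / 2) * frobSq (Z - Y) ≤
                τ * nuclearNorm Z' + (1 / 2) * frobSq (Z' - Y)) →
        Z = U * T * Vᵀ := by

  classical
  open SVTAux in
  set W : Matrix (Fin m) (Fin n) ℝ := U * T * Vᵀ with hWdef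
  set D : Matrix (Fin m) (Fin n) ℝ := τ⁻¹ • (S - T) with hDdef
  set G : Matrix (Fin m) (Fin n) ℝ := U * D * Vᵀ with hGdef
  have hτ' : τ ≠ 0 := hτ.ne'
  have hnuc : ∀ (A : Matrix (Fin m) (Fin n) ℝ), nuclearNorm A
      = ∑ i, Real.sqrt ((Matrix.posSemidef_conjTranspose_mul_self A).1.eigenvalues i) :=
    fun A => rfl
  have hfrob : ∀ (A : Matrix (Fin m) (Fin n) ℝ), frobSq A = ∑ i, ∑ j, (A i j)^2 :=
    fun A => rfl
  have hfnn : ∀ (A : Matrix (Fin m) (Fin n) ℝ), 0 ≤ frobSq A := fun A =>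
    Finset.sum_nonneg fun i _ => Finset.sum_nonneg fun j _ => sq_nonneg _
  have hTpos : ∀ (i : Fin m) (j : Fin n), 0 ≤ T i j := by
    intro i j
    rw [hT]
    split
    · exact le_max_right _ _
    · exact le_refl 0
  have hTdiag : ∀ (i : Fin m) (j : Fin n), (i : ℕ) ≠ (j : ℕ) → T i j = 0 := by
    intro i j h
    rw [hT, if_neg h]
  have hDdiag0 : ∀ (i : Fin m) (j : Fin n), (i : ℕ) ≠ (j : ℕ) → D i j = 0 := by
    intro i j h
    rw [hDdef]
    simp [Matrix.smul_apply, Matrix.sub_apply, hSdiag i j h, hTdiag i j h]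
  have hDb : ∀ (i : Fin m) (j : Fin n), |D i j| ≤ 1 := by
    intro i j
    by_cases h : (i : ℕ) = (j : ℕ)
    · rw [hDdef]
      simp only [Matrix.smul_apply, Matrix.sub_apply, smul_eq_mul]
      rw [hT, if_pos h]
      have hinv : 0 < τ⁻¹ := inv_pos.mpr hτ
      have hone : τ⁻¹ * τ = 1 := inv_mul_cancel₀ hτ'
      rcases le_total (S i j) τ with hc | hc
      · rw [max_eq_right (by linarith)]
        rw [abs_le]
        constructor
        · have := mul_nonneg hinv.le (hSpos i j)
          simp only [sub_zero]
          linarith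
        · simp only [sub_zero]
          nlinarith [mul_le_mul_of_nonneg_left hc hinv.le]
      · rw [max_eq_left (by linarith)]
        have : S i j - (S i j - τ) = τ := by ring
        rw [this, hone]
        norm_num
    · rw [hDdiag0 i j h]
      norm_num
  have hGcontr : ∀ x : Fin n → ℝ, ∑ i, ((G *ᵥ x) i)^2 ≤ ∑ j, (x j)^2 := by
    intro x
    have hsplit : G *ᵥ x = U *ᵥ (D *ᵥ (Vᵀ *ᵥ x)) := by
      rw [hGdef, Matrix.mulVec_mulVec, Matrix.mulVec_mulVec]
    rw [hsplit, sum_sq_mulVec_orth U hU]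
    calc ∑ i, ((D *ᵥ (Vᵀ *ᵥ x)) i)^2
        ≤ ∑ j, ((Vᵀ *ᵥ x) j)^2 := contr_diag D hDdiag0 hDb _
      _ = ∑ j, (x j)^2 := by
          refine sum_sq_mulVec_orth Vᵀ ?_ x
          rw [Matrix.transpose_transpose]
          exact mul_eq_one_comm.mp hV
  have hdual : ∀ Z : Matrix (Fin m) (Fin n) ℝ, minner G Z ≤ nuclearNorm Z := by
    intro Z
    rw [hnuc]
    exact minner_le_nuclear Z G hGcontr
  have hWnuc : nuclearNorm W ≤ ∑ j, ∑ k, T j k := by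
    rw [hnuc]
    exact nuclear_le_entry_sum U hU V hV T hTpos
  have hGW : minner G W = ∑ j, ∑ k, T j k := by
    rw [hGdef, hWdef, minner_conj U hU V hV]
    have hpt : ∀ (i : Fin m) (j : Fin n), D i j * T i j = T i j := by
      intro i j
      by_cases h : (i : ℕ) = (j : ℕ)
      · rcases le_total (S i j) τ with hc | hc
        · have : T i j = 0 := by rw [hT, if_pos h, max_eq_right (by linarith)]
          rw [this, mul_zero]
        · have hD1 : D i j = 1 := by
            rw [hDdef]
            simp only [Matrix.smul_apply, Matrix.sub_apply, smul_eq_mul]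
            rw [hT, if_pos h, max_eq_left (by linarith)]
            have : S i j - (S i j - τ) = τ := by ring
            rw [this, inv_mul_cancel₀ hτ']
          rw [hD1, one_mul]
      · rw [hTdiag i j h, mul_zero]
    simp only [minner]
    exact Finset.sum_congr rfl fun i _ => Finset.sum_congr rfl fun j _ => hpt i j
  have hWY : W - Y = -(τ • G) := by
    have h1 : τ • G = U * (S - T) * Vᵀ := by
      rw [hGdef, hDdef]
      rw [Matrix.mul_smul, Matrix.smul_mul, smul_smul, mul_inv_cancel₀ hτ', one_smul]
    rw [h1, hY, hWdef, Matrix.mul_sub, Matrix.sub_mul, neg_sub]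
  have key : ∀ Z : Matrix (Fin m) (Fin n) ℝ,
      τ * nuclearNorm W + (1/2) * frobSq (W - Y) + (1/2) * frobSq (Z - W)
        ≤ τ * nuclearNorm Z + (1/2) * frobSq (Z - Y) := by
    intro Z
    have hdecomp : Z - Y = (Z - W) + (W - Y) := by abel
    have hexp : frobSq (Z - Y)
        = frobSq (Z - W) + 2 * minner (Z - W) (W - Y) + frobSq (W - Y) := by
      rw [hdecomp, hfrob, hfrob, hfrob, sum_sq_add]
    have hmid : minner (Z - W) (W - Y) = -(τ * (minner G Z - minner G W)) := by
      rw [hWY, minner_neg_right, minner_smul_right, minner_sub_left,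
        minner_comm Z G, minner_comm W G]
    have m1 : τ * minner G Z ≤ τ * nuclearNorm Z :=
      mul_le_mul_of_nonneg_left (hdual Z) hτ.le
    have m2 : τ * nuclearNorm W ≤ τ * (∑ j, ∑ k, T j k) :=
      mul_le_mul_of_nonneg_left hWnuc hτ.le
    have m3 : τ * minner G W = τ * (∑ j, ∑ k, T j k) := by rw [hGW]
    rw [hexp, hmid]
    linarith
  constructor
  · intro Z
    have h := key Z
    have h0 := hfnn (Z - W)
    linarith
  · intro Z hZ
    have h1 := hZ W
    have h2 := key Z
    have h3 : frobSq (Z - W) ≤ 0 := by linarith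
    have h4 : frobSq (Z - W) = 0 := le_antisymm h3 (hfnn _)
    have h5 : ∀ (i : Fin m) (j : Fin n), (Z - W) i j = 0 := by
      intro i j
      rw [hfrob] at h4
      have hrow := (Finset.sum_eq_zero_iff_of_nonneg
        (fun i _ => Finset.sum_nonneg fun j _ => sq_nonneg ((Z - W) i j))).mp h4 i
        (Finset.mem_univ i)
      have hentry := (Finset.sum_eq_zero_iff_of_nonneg
        (fun j _ => sq_nonneg ((Z - W) i j))).mp hrow j (Finset.mem_univ j)
      exact pow_eq_zero_iff (by norm_num) |>.mp hentry
    ext i j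
    have := h5 i j
    rw [Matrix.sub_apply, sub_eq_zero] at this
    exact this
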